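/- Let T be a tree on n ≥ 3 vertices. Then there exist subtrees T' and T'' of T such that T' and T'' intersect in precisely one vertex of T, every edge of T lies in precisely one of T' and T'', and both e(T') ≥ e(T)/3 and e(T'') ≥ e(T)/3, where e(·) denotes the number of edges. -/

import Mathlib

set_option linter.unusedSectionVars false
set_option linter.unusedVariables false
set_option maxHeartbeats 1000000

open SimpleGraph Set

noncomputable section TreeSplitAux

namespace TreeSplit

variable {V : Type} [Fintype V] {T : SimpleGraph V}

/-- The unique path between two vertices of a tree. -/
def pa (hT : T.IsTree) (v x : V) : T.Walk v x :=
  (hT.existsUnique_path v x).exists.choose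

lemma pa_isPath (hT : T.IsTree) (v x : V) : (pa hT v x).IsPath :=
  (hT.existsUnique_path v x).exists.choose_spec

lemma pa_unique (hT : T.IsTree) {v x : V} (q : T.Walk v x) (hq : q.IsPath) :
    q = pa hT v x :=
  (hT.existsUnique_path v x).unique hq (pa_isPath hT v x)

lemma pa_self (hT : T.IsTree) (v : V) : pa hT v v = SimpleGraph.Walk.nil :=
  (pa_unique hT _ SimpleGraph.Walk.IsPath.nil).symm

lemma pa_length_pos (hT : T.IsTree) {v x : V} (hx : x ≠ v) : 0 < (pa hT v x).length :=
  Nat.pos_of_ne_zero fun h => hx (SimpleGraph.Walk.eq_of_length_eq_zero h).symm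

/-- The first vertex after `v` on the unique path from `v` to `x`. -/
def gg (hT : T.IsTree) (v x : V) : V := (pa hT v x).getVert 1

lemma gg_self (hT : T.IsTree) (v : V) : gg hT v v = v := by
  rw [gg, pa_self]; rfl

lemma adj_gg (hT : T.IsTree) {v x : V} (hx : x ≠ v) : T.Adj v (gg hT v x) := by
  have := (pa hT v x).adj_getVert_succ (i := 0) (pa_length_pos hT hx)
  simpa [gg] using this

lemma gg_of_adj (hT : T.IsTree) {v u : V} (h : T.Adj v u) : gg hT v u = u := by
  have hp : (SimpleGraph.Walk.cons h SimpleGraph.Walk.nil).IsPath :=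
    SimpleGraph.Walk.IsPath.nil.cons (by simp [h.ne])
  rw [gg, ← pa_unique hT _ hp]
  rfl

lemma pa_decomp (hT : T.IsTree) {v x : V} (hx : x ≠ v) :
    ∃ (h : T.Adj v (gg hT v x)) (q : T.Walk (gg hT v x) x),
      pa hT v x = SimpleGraph.Walk.cons h q ∧ q = pa hT (gg hT v x) x ∧ v ∉ q.support := by
  have hnn : ¬ (pa hT v x).Nil := by
    rw [SimpleGraph.Walk.not_nil_iff_lt_length]; exact pa_length_pos hT hx
  obtain ⟨w, h, q, hq⟩ := SimpleGraph.Walk.not_nil_iff.mp hnn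
  have hw : w = gg hT v x := by
    rw [gg, hq, SimpleGraph.Walk.getVert_cons_succ, SimpleGraph.Walk.getVert_zero]
  subst hw
  have hp := pa_isPath hT v x
  rw [hq, SimpleGraph.Walk.cons_isPath_iff] at hp
  exact ⟨h, q, hq, pa_unique hT q hp.1, hp.2⟩

lemma gg_mem_support (hT : T.IsTree) {v x : V} (hx : x ≠ v) :
    gg hT v x ∈ (pa hT v x).support := by
  obtain ⟨h, q, hq, -, -⟩ := pa_decomp hT hx
  rw [hq]
  simp

lemma getVert_takeUntil [DecidableEq V] {a b u : V} (p : T.Walk a b)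
    (hu : u ∈ p.support) {i : ℕ} (hi : i ≤ (p.takeUntil u hu).length) :
    (p.takeUntil u hu).getVert i = p.getVert i := by
  rcases lt_or_eq_of_le hi with hlt | heq
  · conv_rhs => rw [← SimpleGraph.Walk.take_spec p hu]
    rw [SimpleGraph.Walk.getVert_append, if_pos hlt]
  · have hni : ¬ i < (p.takeUntil u hu).length := by omega
    conv_rhs => rw [← SimpleGraph.Walk.take_spec p hu]
    rw [SimpleGraph.Walk.getVert_append, if_neg hni, heq, Nat.sub_self,
      SimpleGraph.Walk.getVert_zero, SimpleGraph.Walk.getVert_length]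

lemma gg_eq_of_mem_support (hT : T.IsTree) {v x y : V} (hx : x ≠ v) (hy : y ≠ v)
    (h : y ∈ (pa hT v x).support) : gg hT v y = gg hT v x := by
  classical
  have ht : ((pa hT v x).takeUntil y h).IsPath := (pa_isPath hT v x).takeUntil h
  have hEq : (pa hT v x).takeUntil y h = pa hT v y := pa_unique hT _ ht
  have hlen : 1 ≤ ((pa hT v x).takeUntil y h).length := by
    rcases Nat.eq_zero_or_pos ((pa hT v x).takeUntil y h).length with h0 | h1
    · exact absurd (SimpleGraph.Walk.eq_of_length_eq_zero h0).symm hy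
    · exact h1
  rw [gg, ← hEq, getVert_takeUntil _ h hlen]
  rfl

lemma gg_eq_gg_of_adj (hT : T.IsTree) {v a b : V} (ha : a ≠ v) (hb : b ≠ v)
    (hab : T.Adj a b) : gg hT v a = gg hT v b := by
  classical
  by_cases h : b ∈ (pa hT v a).support
  · exact (gg_eq_of_mem_support hT ha hb h).symm
  · have hic : ((pa hT v a).concat hab).IsPath := by
      rw [← SimpleGraph.Walk.isPath_reverse_iff, SimpleGraph.Walk.reverse_concat]
      exact ((pa_isPath hT v a).reverse).cons (by simpa using h)
    have hEq : (pa hT v a).concat hab = pa hT v b := pa_unique hT _ hic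
    have h1 : ((pa hT v a).concat hab).getVert 1 = (pa hT v a).getVert 1 := by
      rw [SimpleGraph.Walk.concat_eq_append, SimpleGraph.Walk.getVert_append]
      by_cases h2 : 1 < (pa hT v a).length
      · rw [if_pos h2]
      · have hl : (pa hT v a).length = 1 :=
          le_antisymm (not_lt.mp h2) (pa_length_pos hT ha)
        rw [if_neg (by omega), hl, Nat.sub_self, SimpleGraph.Walk.getVert_zero, ← hl,
          SimpleGraph.Walk.getVert_length]
    rw [gg, gg, ← hEq, h1]

lemma gg_compl (hT : T.IsTree) {u v x : V} (huv : T.Adj u v) (hx : x ≠ v) :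
    gg hT v x = u ↔ gg hT u x ≠ v := by
  by_cases hxu : x = u
  · subst hxu
    simp [gg_of_adj hT huv.symm, gg_self, (huv.ne : x ≠ v)]
  · constructor
    · intro hgg
      obtain ⟨h, q, hcons, hq, hvq⟩ := pa_decomp hT hx
      rw [hq] at hvq
      rw [hgg] at hvq
      intro hc
      have := gg_mem_support hT hxu
      rw [hc] at this
      exact hvq this
    · intro hne
      have hvs : v ∉ (pa hT u x).support := by
        intro hv
        apply hne
        rw [← gg_eq_of_mem_support hT hxu huv.ne' hv, gg_of_adj hT huv]
      have hp : (SimpleGraph.Walk.cons huv.symm (pa hT u x)).IsPath :=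
        (pa_isPath hT u x).cons hvs
      rw [gg, ← pa_unique hT _ hp, SimpleGraph.Walk.getVert_cons_succ,
        SimpleGraph.Walk.getVert_zero]

/-- The vertex set of the union of the branches at `v` through neighbours in `S`. -/
def Wv (hT : T.IsTree) (v : V) (S : Set V) : Set V :=
  insert v {x | x ≠ v ∧ gg hT v x ∈ S}

/-- The subtree of `T` consisting of the branches at `v` through neighbours in `S`. -/
def HH (hT : T.IsTree) (v : V) (S : Set V) : T.Subgraph :=
  (⊤ : T.Subgraph).induce (Wv hT v S)

open Classical in
/-- The classification of an edge `{a, b}`: the neighbour of `v` through whose branch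
this edge lies. -/
def cls (hT : T.IsTree) (v a b : V) : V :=
  if a = v then b else if b = v then a else gg hT v a

lemma mem_edgeSet_iff (hT : T.IsTree) {v a b : V} (S : Set V) (hab : T.Adj a b) :
    s(a, b) ∈ (HH hT v S).edgeSet ↔ cls hT v a b ∈ S := by
  rw [SimpleGraph.Subgraph.mem_edgeSet]
  show (Wv hT v S) a ∧ (Wv hT v S) b ∧ (⊤ : T.Subgraph).Adj a b ↔ _
  have hWv : ∀ y, y ∈ Wv hT v S ↔ y = v ∨ (y ≠ v ∧ gg hT v y ∈ S) := by
    intro y; simp [Wv, Set.mem_insert_iff]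
  by_cases ha : a = v
  · subst ha
    have hb : b ≠ a := hab.ne'
    simp only [cls, if_pos rfl]
    constructor
    · rintro ⟨-, hbW, -⟩
      rcases (hWv b).mp hbW with h | ⟨-, h⟩
      · exact absurd h hb
      · rwa [gg_of_adj hT hab] at h
    · intro hbS
      exact ⟨(hWv _).mpr (Or.inl rfl), (hWv _).mpr (Or.inr ⟨hb, by rwa [gg_of_adj hT hab]⟩),
        by simpa using hab⟩
  · by_cases hbv : b = v
    · subst hbv
      simp only [cls, if_neg ha, if_pos rfl]
      constructor
      · rintro ⟨haW, -, -⟩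
        rcases (hWv a).mp haW with h | ⟨-, h⟩
        · exact absurd h ha
        · rwa [gg_of_adj hT hab.symm] at h
      · intro haS
        exact ⟨(hWv _).mpr (Or.inr ⟨ha, by rwa [gg_of_adj hT hab.symm]⟩),
          (hWv _).mpr (Or.inl rfl), by simpa using hab⟩
    · simp only [cls, if_neg ha, if_neg hbv]
      constructor
      · rintro ⟨haW, -, -⟩
        rcases (hWv a).mp haW with h | ⟨-, h⟩
        · exact absurd h ha
        · exact h
      · intro haS
        refine ⟨(hWv _).mpr (Or.inr ⟨ha, haS⟩),
          (hWv _).mpr (Or.inr ⟨hbv, ?_⟩), by simpa using hab⟩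
        rwa [← gg_eq_gg_of_adj hT ha hbv hab]

lemma adj_of_mem_edgeSet {H : T.Subgraph} {a b : V} (h : s(a, b) ∈ H.edgeSet) :
    T.Adj a b :=
  (SimpleGraph.Subgraph.mem_edgeSet.mp h).adj_sub

lemma reach_in {W : Set V} : ∀ {a b : V} (p : T.Walk a b), (∀ y ∈ p.support, y ∈ W) →
    ∀ (ha : a ∈ ((⊤ : T.Subgraph).induce W).verts) (hb : b ∈ ((⊤ : T.Subgraph).induce W).verts),
      ((⊤ : T.Subgraph).induce W).coe.Reachable ⟨a, ha⟩ ⟨b, hb⟩ := by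
  intro a b p
  induction p with
  | nil => intro _ ha hb; rfl
  | cons h q ih =>
    intro hW ha hb
    refine (SimpleGraph.Adj.reachable ?_).trans
      (ih (fun u hu => hW u (by simp [hu])) (hW _ (by simp)) hb)
    rw [SimpleGraph.Subgraph.coe_adj]
    exact ⟨ha, hW _ (by simp), by simpa using h⟩

lemma mem_Wv_self (hT : T.IsTree) (v : V) (S : Set V) : v ∈ Wv hT v S :=
  Set.mem_insert _ _

lemma support_subset_Wv (hT : T.IsTree) {v : V} {S : Set V} {x : V} (hx : x ∈ Wv hT v S) :
    ∀ y ∈ (pa hT v x).support, y ∈ Wv hT v S := by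
  intro y hy
  by_cases hxv : x = v
  · subst hxv
    rw [pa_self] at hy
    simp only [SimpleGraph.Walk.support_nil, List.mem_singleton] at hy
    subst hy
    exact mem_Wv_self hT _ S
  · by_cases hyv : y = v
    · subst hyv; exact mem_Wv_self hT _ S
    · rcases Set.mem_insert_iff.mp hx with h | h
      · exact absurd h hxv
      · refine Set.mem_insert_of_mem _ ⟨hyv, ?_⟩
        rw [gg_eq_of_mem_support hT hxv hyv hy]
        exact h.2

lemma HH_connected (hT : T.IsTree) (v : V) (S : Set V) : (HH hT v S).Connected := by
  have hv : v ∈ Wv hT v S := mem_Wv_self hT v S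
  refine ⟨?_⟩
  rw [SimpleGraph.connected_iff]
  refine ⟨fun x y => ?_, ⟨⟨v, hv⟩⟩⟩
  obtain ⟨x, hx⟩ := x
  obtain ⟨y, hy⟩ := y
  have hx' : x ∈ Wv hT v S := hx
  have hy' : y ∈ Wv hT v S := hy
  have r1 := reach_in (pa hT v x) (support_subset_Wv hT hx') hv hx
  have r2 := reach_in (pa hT v y) (support_subset_Wv hT hy') hv hy
  exact r1.symm.trans r2

/-- The number of edges in the branches at `v` through `S`. -/
def ec (hT : T.IsTree) (v : V) (S : Set V) : ℕ := (HH hT v S).edgeSet.ncard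

lemma Wv_inter (hT : T.IsTree) (v : V) (S : Set V) :
    Wv hT v S ∩ Wv hT v Sᶜ = {v} := by
  ext x
  simp only [Set.mem_inter_iff, Set.mem_singleton_iff, Wv, Set.mem_insert_iff,
    Set.mem_setOf_eq, Set.mem_compl_iff]
  constructor
  · rintro ⟨hx1 | ⟨hx, h1⟩, hx2 | ⟨-, h2⟩⟩ <;> first | assumption | exact absurd h1 h2
  · rintro rfl
    exact ⟨Or.inl rfl, Or.inl rfl⟩

lemma HH_edge_union (hT : T.IsTree) (v : V) (S S' : Set V) :
    (HH hT v (S ∪ S')).edgeSet = (HH hT v S).edgeSet ∪ (HH hT v S').edgeSet := by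
  ext e
  induction e using Sym2.ind with
  | _ a b =>
    simp only [Set.mem_union]
    constructor
    · intro h
      have hab := adj_of_mem_edgeSet h
      rw [mem_edgeSet_iff hT _ hab] at h
      rw [mem_edgeSet_iff hT _ hab, mem_edgeSet_iff hT _ hab]
      exact h
    · intro h
      have hab : T.Adj a b := by
        rcases h with h | h <;> exact adj_of_mem_edgeSet h
      rw [mem_edgeSet_iff hT _ hab] at h ⊢
      rwa [mem_edgeSet_iff hT _ hab] at h

lemma HH_edge_disjoint (hT : T.IsTree) (v : V) {S S' : Set V} (h : Disjoint S S') :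
    Disjoint (HH hT v S).edgeSet (HH hT v S').edgeSet := by
  rw [Set.disjoint_left]
  intro e h1 h2
  induction e using Sym2.ind with
  | _ a b =>
    have hab := adj_of_mem_edgeSet h1
    rw [mem_edgeSet_iff hT _ hab] at h1 h2
    exact Set.disjoint_left.mp h h1 h2

lemma ec_union (hT : T.IsTree) (v : V) {S S' : Set V} (h : Disjoint S S') :
    ec hT v (S ∪ S') = ec hT v S + ec hT v S' := by
  rw [ec, HH_edge_union]
  exact Set.ncard_union_eq (HH_edge_disjoint hT v h) (Set.toFinite _) (Set.toFinite _)

lemma HH_univ (hT : T.IsTree) (v : V) :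
    (HH hT v Set.univ).edgeSet = T.edgeSet := by
  refine subset_antisymm (SimpleGraph.Subgraph.edgeSet_subset _) ?_
  intro e he
  induction e using Sym2.ind with
  | _ a b =>
    rw [SimpleGraph.mem_edgeSet] at he
    rw [mem_edgeSet_iff hT _ he]
    trivial

lemma ec_compl (hT : T.IsTree) (v : V) (S : Set V) :
    ec hT v S + ec hT v Sᶜ = T.edgeSet.ncard := by
  rw [← ec_union hT v disjoint_compl_right, Set.union_compl_self, ec, HH_univ]

lemma ec_empty (hT : T.IsTree) (v : V) : ec hT v ∅ = 0 := by
  have h : (HH hT v (∅ : Set V)).edgeSet = ∅ := by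
    rw [Set.eq_empty_iff_forall_notMem]
    intro e he
    induction e using Sym2.ind with
    | _ a b =>
      have hab := adj_of_mem_edgeSet he
      rw [mem_edgeSet_iff hT _ hab] at he
      exact he
  rw [ec, h, Set.ncard_empty]

lemma ec_finset (hT : T.IsTree) (v : V) (t : Finset V) :
    ec hT v ↑t = ∑ u ∈ t, ec hT v {u} := by
  classical
  induction t using Finset.induction_on with
  | empty => simpa using ec_empty hT v
  | @insert a t ha ih =>
    rw [Finset.coe_insert, Set.insert_eq,
      ec_union hT v (by simpa using ha), ih, Finset.sum_insert ha]

lemma cls_mem_neighbor (hT : T.IsTree) {v a b : V} (hab : T.Adj a b) :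
    T.Adj v (cls hT v a b) := by
  rw [cls]
  by_cases ha : a = v
  · subst ha; rw [if_pos rfl]; exact hab
  · rw [if_neg ha]
    by_cases hb : b = v
    · subst hb; rw [if_pos rfl]; exact hab.symm
    · rw [if_neg hb]; exact adj_gg hT ha

lemma ec_neighbors (hT : T.IsTree) (v : V) :
    ec hT v (T.neighborSet v) = T.edgeSet.ncard := by
  have h : (HH hT v (T.neighborSet v)).edgeSet = T.edgeSet := by
    refine subset_antisymm (SimpleGraph.Subgraph.edgeSet_subset _) ?_
    intro e he
    induction e using Sym2.ind with
    | _ a b =>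
      rw [SimpleGraph.mem_edgeSet] at he
      rw [mem_edgeSet_iff hT _ he]
      simpa using cls_mem_neighbor hT he
  rw [ec, h]

lemma cls_eval1 (hT : T.IsTree) {v a : V} (b : V) (h : a = v) : cls hT v a b = b := by
  rw [cls, if_pos h]

lemma cls_eval2 (hT : T.IsTree) {v a b : V} (h : a ≠ v) (h2 : b = v) : cls hT v a b = a := by
  rw [cls, if_neg h, if_pos h2]

lemma cls_eval3 (hT : T.IsTree) {v a b : V} (h : a ≠ v) (h2 : b ≠ v) :
    cls hT v a b = gg hT v a := by
  rw [cls, if_neg h, if_neg h2]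

lemma cls_or (hT : T.IsTree) {u v a b : V} (huv : T.Adj u v) (hab : T.Adj a b) :
    cls hT v a b = u ∨ cls hT u a b = v := by
  by_cases ha : a = v
  · right
    have hau : a ≠ u := by rw [ha]; exact huv.ne'
    by_cases hb : b = u
    · rw [cls_eval2 hT hau hb, ha]
    · rw [cls_eval3 hT hau hb, ha, gg_of_adj hT huv]
  · by_cases hb : b = v
    · by_cases hau : a = u
      · left; rw [cls_eval2 hT ha hb, hau]
      · right
        have hbu : b ≠ u := by rw [hb]; exact huv.ne'
        rw [cls_eval3 hT hau hbu, gg_eq_gg_of_adj hT hau hbu hab, hb, gg_of_adj hT huv]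
    · by_cases hau : a = u
      · left; rw [cls_eval3 hT ha hb, hau, gg_of_adj hT huv.symm]
      · by_cases hbu : b = u
        · left
          rw [cls_eval3 hT ha hb, gg_eq_gg_of_adj hT ha hb hab, hbu, gg_of_adj hT huv.symm]
        · by_cases hg : gg hT u a = v
          · right; rw [cls_eval3 hT hau hbu, hg]
          · left; rw [cls_eval3 hT ha hb]; exact (gg_compl hT huv ha).mpr hg

lemma cls_both (hT : T.IsTree) {u v a b : V} (huv : T.Adj u v) (hab : T.Adj a b)
    (h1 : cls hT v a b = u) (h2 : cls hT u a b = v) : s(a, b) = s(u, v) := by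
  by_cases ha : a = v
  · rw [cls_eval1 hT b ha] at h1
    rw [ha, h1, Sym2.eq_swap]
  · by_cases hb : b = v
    · rw [cls_eval2 hT ha hb] at h1
      rw [h1, hb]
    · exfalso
      by_cases hau : a = u
      · rw [cls_eval1 hT b hau] at h2
        exact hb h2
      · by_cases hbu : b = u
        · rw [cls_eval2 hT hau hbu] at h2
          exact ha h2
        · rw [cls_eval3 hT ha hb] at h1
          rw [cls_eval3 hT hau hbu] at h2
          exact ((gg_compl hT huv ha).mp h1) h2

lemma uv_mem_v (hT : T.IsTree) {u v : V} (huv : T.Adj u v) :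
    s(u, v) ∈ (HH hT v {u}).edgeSet := by
  rw [mem_edgeSet_iff hT _ huv, cls_eval2 hT huv.ne rfl]
  rfl

lemma uv_mem_u (hT : T.IsTree) {u v : V} (huv : T.Adj u v) :
    s(u, v) ∈ (HH hT u {v}).edgeSet := by
  rw [mem_edgeSet_iff hT _ huv, cls_eval1 hT v rfl]
  rfl

lemma branch_union (hT : T.IsTree) {u v : V} (huv : T.Adj u v) :
    (HH hT v {u}).edgeSet ∪ (HH hT u {v}).edgeSet = T.edgeSet := by
  refine subset_antisymm (Set.union_subset (SimpleGraph.Subgraph.edgeSet_subset _)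
    (SimpleGraph.Subgraph.edgeSet_subset _)) ?_
  intro e he
  induction e using Sym2.ind with
  | _ a b =>
    rw [SimpleGraph.mem_edgeSet] at he
    rw [Set.mem_union, mem_edgeSet_iff hT _ he, mem_edgeSet_iff hT _ he,
      Set.mem_singleton_iff, Set.mem_singleton_iff]
    exact cls_or hT huv he

lemma branch_inter (hT : T.IsTree) {u v : V} (huv : T.Adj u v) :
    (HH hT v {u}).edgeSet ∩ (HH hT u {v}).edgeSet = {s(u, v)} := by
  refine subset_antisymm ?_ ?_
  · intro e he
    induction e using Sym2.ind with
    | _ a b =>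
      have hab := adj_of_mem_edgeSet he.1
      have h1 := he.1
      have h2 := he.2
      rw [mem_edgeSet_iff hT _ hab, Set.mem_singleton_iff] at h1 h2
      exact cls_both hT huv hab h1 h2
  · rw [Set.singleton_subset_iff]
    exact ⟨uv_mem_v hT huv, uv_mem_u hT huv⟩

lemma ncard_branch (hT : T.IsTree) {u v : V} (huv : T.Adj u v) :
    ec hT v {u} + ec hT u {v} = T.edgeSet.ncard + 1 := by
  have h := Set.ncard_union_add_ncard_inter (HH hT v {u}).edgeSet (HH hT u {v}).edgeSet
    (Set.toFinite _) (Set.toFinite _)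
  rw [branch_union hT huv, branch_inter hT huv, Set.ncard_singleton] at h
  rw [ec, ec, ← h]

lemma branch_nested (hT : T.IsTree) {u v w : V} (huv : T.Adj u v) (huw : T.Adj u w)
    (hwv : w ≠ v) :
    (HH hT u {w}).edgeSet ⊆ (HH hT v {u}).edgeSet \ {s(u, v)} := by
  intro e he
  induction e using Sym2.ind with
  | _ a b =>
    have hab := adj_of_mem_edgeSet he
    rw [mem_edgeSet_iff hT _ hab, Set.mem_singleton_iff] at he
    rw [Set.mem_diff, mem_edgeSet_iff hT _ hab, Set.mem_singleton_iff, Set.mem_singleton_iff]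
    by_cases hau : a = u
    · rw [cls_eval1 hT b hau] at he
      have hbv : b ≠ v := by rw [he]; exact hwv
      have hav : a ≠ v := by rw [hau]; exact huv.ne
      constructor
      · rw [cls_eval3 hT hav hbv, hau, gg_of_adj hT huv.symm]
      · intro hcon
        rw [Sym2.eq_iff] at hcon
        rcases hcon with ⟨h1, h2⟩ | ⟨h1, h2⟩
        · exact hwv (he.symm.trans h2)
        · exact huv.ne (hau.symm.trans h1)
    · by_cases hbu : b = u
      · rw [cls_eval2 hT hau hbu] at he
        have hav : a ≠ v := by rw [he]; exact hwv
        have hbv : b ≠ v := by rw [hbu]; exact huv.ne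
        constructor
        · rw [cls_eval3 hT hav hbv, gg_eq_gg_of_adj hT hav hbv hab, hbu,
            gg_of_adj hT huv.symm]
        · intro hcon
          rw [Sym2.eq_iff] at hcon
          rcases hcon with ⟨h1, h2⟩ | ⟨h1, h2⟩
          · exact hau h1
          · exact hav h1
      · rw [cls_eval3 hT hau hbu] at he
        have hav : a ≠ v := by
          intro h
          rw [h, gg_of_adj hT huv] at he
          exact hwv he.symm
        have hbv : b ≠ v := by
          intro h
          rw [gg_eq_gg_of_adj hT hau hbu hab, h, gg_of_adj hT huv] at he
          exact hwv he.symm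
        constructor
        · rw [cls_eval3 hT hav hbv]
          exact (gg_compl hT huv hav).mpr (by rw [he]; exact hwv)
        · intro hcon
          rw [Sym2.eq_iff] at hcon
          rcases hcon with ⟨h1, h2⟩ | ⟨h1, h2⟩
          · exact hau h1
          · exact hav h1

lemma cc_lt (hT : T.IsTree) {u v w : V} (huv : T.Adj u v) (huw : T.Adj u w) (hwv : w ≠ v) :
    ec hT u {w} < ec hT v {u} := by
  calc ec hT u {w} ≤ ((HH hT v {u}).edgeSet \ {s(u, v)}).ncard :=
        Set.ncard_le_ncard (branch_nested hT huv huw hwv) (Set.toFinite _)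
    _ < ec hT v {u} :=
        Set.ncard_diff_singleton_lt_of_mem (uv_mem_v hT huv) (Set.toFinite _)

lemma greedy {ι : Type} [DecidableEq ι] (s : Finset ι) (c : ι → ℕ) (m : ℕ) (hm : 1 ≤ m)
    (htot : ∑ i ∈ s, c i = m) (hmax : ∀ i ∈ s, 3 * c i ≤ 2 * m) :
    ∃ t, t ⊆ s ∧ m ≤ 3 * ∑ i ∈ t, c i ∧ 3 * ∑ i ∈ t, c i ≤ 2 * m := by
  by_cases hbig : ∃ i ∈ s, m ≤ 3 * c i
  · obtain ⟨i, his, hi⟩ := hbig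
    refine ⟨{i}, Finset.singleton_subset_iff.mpr his, ?_, ?_⟩ <;>
      rw [Finset.sum_singleton]
    · exact hi
    · exact hmax i his
  · push_neg at hbig
    obtain ⟨t, htP, htmin⟩ := Finset.exists_min_image
      ((s.powerset).filter fun t => m ≤ 3 * ∑ i ∈ t, c i) Finset.card
      ⟨s, Finset.mem_filter.mpr ⟨Finset.mem_powerset_self s, by rw [htot]; omega⟩⟩
    rw [Finset.mem_filter, Finset.mem_powerset] at htP
    obtain ⟨hts, htm⟩ := htP
    obtain ⟨i, hit⟩ : t.Nonempty := by
      rcases Finset.eq_empty_or_nonempty t with rfl | h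
      · rw [Finset.sum_empty] at htm; omega
      · exact h
    have hrem : 3 * ∑ j ∈ t.erase i, c j < m := by
      by_contra hc
      push_neg at hc
      have hmem : t.erase i ∈ (s.powerset).filter (fun t => m ≤ 3 * ∑ i ∈ t, c i) :=
        Finset.mem_filter.mpr
          ⟨Finset.mem_powerset.mpr ((Finset.erase_subset i t).trans hts), hc⟩
      have h1 := htmin _ hmem
      have h2 := Finset.card_erase_lt_of_mem hit
      omega
    have hsum : ∑ j ∈ t.erase i, c j + c i = ∑ j ∈ t, c j := Finset.sum_erase_add t c hit
    have hci := hbig i (hts hit)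
    exact ⟨t, hts, htm, by omega⟩

end TreeSplit

end TreeSplitAux

/-- Any tree `T` on `n ≥ 3` vertices splits into two subtrees `T'`,
`T''` meeting in exactly one vertex, partitioning the edges of `T`, each containing at
least a third of the edges of `T`. -/
theorem tree_edge_split :
    ∀ (V : Type) [Fintype V], ∀ T : SimpleGraph V, T.IsTree → 3 ≤ Fintype.card V →
      ∃ T' T'' : T.Subgraph, T'.Connected ∧ T''.Connected ∧
        (T'.verts ∩ T''.verts).ncard = 1 ∧
        T'.edgeSet ∪ T''.edgeSet = T.edgeSet ∧
        Disjoint T'.edgeSet T''.edgeSet ∧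
        (T.edgeSet.ncard : ℝ) / 3 ≤ (T'.edgeSet.ncard : ℝ) ∧
        (T.edgeSet.ncard : ℝ) / 3 ≤ (T''.edgeSet.ncard : ℝ) := by
  classical
  intro V _ T hT hcard
  haveI : Nonempty V := Fintype.card_pos_iff.mp (by omega)
  set m := T.edgeSet.ncard with hmdef
  have hmcard : m + 1 = Fintype.card V := by
    haveI : Fintype T.edgeSet := (Set.toFinite _).fintype
    have h2 := hT.card_edgeFinset
    rw [hmdef, Set.ncard_eq_toFinset_card' T.edgeSet]
    simpa [SimpleGraph.edgeFinset] using h2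
  have hm2 : 2 ≤ m := by omega
  -- the max branch size at a vertex
  obtain ⟨v, -, hv⟩ := Finset.exists_min_image Finset.univ
    (fun x => ((Set.toFinite (T.neighborSet x)).toFinset).sup
      (fun u => TreeSplit.ec hT x {u})) Finset.univ_nonempty
  -- the centroid property
  have hbound : ∀ u ∈ (Set.toFinite (T.neighborSet v)).toFinset,
      2 * TreeSplit.ec hT v {u} ≤ m + 1 := by
    intro u hu
    have huv : T.Adj v u := by
      have := (Set.Finite.mem_toFinset _).mp hu
      simpa using this
    by_contra hc
    push_neg at hc
    have h1 := TreeSplit.ncard_branch hT huv.symm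
    rw [← hmdef] at h1
    have h2 : ∀ w ∈ (Set.toFinite (T.neighborSet u)).toFinset,
        TreeSplit.ec hT u {w} ≤ TreeSplit.ec hT v {u} - 1 := by
      intro w hw
      have huw : T.Adj u w := by
        have := (Set.Finite.mem_toFinset _).mp hw
        simpa using this
      by_cases hwv : w = v
      · subst hwv; omega
      · have := TreeSplit.cc_lt hT huv.symm huw hwv
        omega
    have h3 : ((Set.toFinite (T.neighborSet u)).toFinset).sup
        (fun w => TreeSplit.ec hT u {w}) ≤ TreeSplit.ec hT v {u} - 1 :=
      Finset.sup_le h2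
    have h4 : TreeSplit.ec hT v {u} ≤ ((Set.toFinite (T.neighborSet v)).toFinset).sup
        (fun w => TreeSplit.ec hT v {w}) :=
      Finset.le_sup (f := fun w => TreeSplit.ec hT v {w}) hu
    have h5 : ((Set.toFinite (T.neighborSet v)).toFinset).sup
          (fun w => TreeSplit.ec hT v {w}) ≤
        ((Set.toFinite (T.neighborSet u)).toFinset).sup
          (fun w => TreeSplit.ec hT u {w}) :=
      hv u (Finset.mem_univ u)
    omega
  have htot : ∑ u ∈ (Set.toFinite (T.neighborSet v)).toFinset, TreeSplit.ec hT v {u} = m := by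
    rw [← TreeSplit.ec_finset hT v, Set.Finite.coe_toFinset, hmdef]
    exact TreeSplit.ec_neighbors hT v
  have hmax : ∀ u ∈ (Set.toFinite (T.neighborSet v)).toFinset,
      3 * TreeSplit.ec hT v {u} ≤ 2 * m := by
    intro u hu
    have := hbound u hu
    omega
  obtain ⟨t, hts, hge, hle⟩ := TreeSplit.greedy _ _ m (by omega) htot hmax
  have hσ : TreeSplit.ec hT v ↑t = ∑ u ∈ t, TreeSplit.ec hT v {u} := TreeSplit.ec_finset hT v t
  have hcompl := TreeSplit.ec_compl hT v ↑t
  rw [← hmdef] at hcompl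
  refine ⟨TreeSplit.HH hT v ↑t, TreeSplit.HH hT v (↑t)ᶜ,
    TreeSplit.HH_connected hT v _, TreeSplit.HH_connected hT v _, ?_, ?_, ?_, ?_, ?_⟩
  · show (TreeSplit.Wv hT v ↑t ∩ TreeSplit.Wv hT v (↑t)ᶜ).ncard = 1
    rw [TreeSplit.Wv_inter hT v ↑t]
    exact Set.ncard_singleton v
  · rw [← TreeSplit.HH_edge_union hT v, Set.union_compl_self]
    exact TreeSplit.HH_univ hT v
  · exact TreeSplit.HH_edge_disjoint hT v disjoint_compl_right
  · rw [div_le_iff₀ (by norm_num : (0:ℝ) < 3)]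
    have h1 : m ≤ (TreeSplit.ec hT v ↑t) * 3 := by omega
    exact_mod_cast h1
  · rw [div_le_iff₀ (by norm_num : (0:ℝ) < 3)]
    have h1 : m ≤ (TreeSplit.ec hT v (↑t)ᶜ) * 3 := by omega
    exact_mod_cast h1
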